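/- Let H be a Hopf algebra over a field k with antipode S and counit ε. Then the kernel ker ε of the counit, equipped with the right adjoint action g ⊳ h := S(h₍₁₎) g h₍₂₎ (for g ∈ ker ε, h ∈ H) and the right coaction Δ̃ : ker ε → ker ε ⊗ H, h ↦ h₍₁₎ ⊗ h₍₂₎ − 1 ⊗ h, is a Yetter–Drinfel'd module over H; in particular ⊳ is a right H-module action, Δ̃ is a well-defined counital coassociative right H-coaction with values in (ker ε) ⊗ H, and the Yetter–Drinfel'd compatibility condition holds. -/

import Mathlib

open TensorProduct LinearMap

/-- The right adjoint action `g ⊗ h ↦ S(h₍₁₎) g h₍₂₎` of a Hopf algebra on itself,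
as a linear map `H ⊗ H → H`. -/
noncomputable def adAct (k H : Type) [Field k] [Ring H] [HopfAlgebra k H] :
    H ⊗[k] H →ₗ[k] H :=
  (LinearMap.mul' k H)
  ∘ₗ (rTensor H ((LinearMap.mul' k H) ∘ₗ (TensorProduct.comm k H H).toLinearMap))
  ∘ₗ (TensorProduct.assoc k H H H).symm.toLinearMap
  ∘ₗ (lTensor H (rTensor H (HopfAlgebra.antipode (R := k))))
  ∘ₗ (lTensor H (Coalgebra.comul (R := k)))

/-- The coaction `h ↦ Δ(h) − 1 ⊗ h` on a Hopf algebra. -/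
noncomputable def tilDelta (k H : Type) [Field k] [Ring H] [HopfAlgebra k H] :
    H →ₗ[k] H ⊗[k] H :=
  Coalgebra.comul - (TensorProduct.mk k H H) 1

/-- For a right action `act` and right coaction `ρ` on `M`, the map
`x ⊗ h ↦ (xh₍₂₎)₍₀₎ ⊗ h₍₁₎(xh₍₂₎)₍₁₎` (left side of the Yetter–Drinfel'd condition). -/
noncomputable def ydL (k H M : Type) [Field k] [Ring H] [HopfAlgebra k H]
    [AddCommGroup M] [Module k M]
    (act : M ⊗[k] H →ₗ[k] M) (ρ : M →ₗ[k] M ⊗[k] H) : M ⊗[k] H →ₗ[k] M ⊗[k] H :=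
  (lTensor M ((LinearMap.mul' k H) ∘ₗ (TensorProduct.comm k H H).toLinearMap))
  ∘ₗ (TensorProduct.assoc k M H H).toLinearMap
  ∘ₗ (rTensor H ρ)
  ∘ₗ (rTensor H act)
  ∘ₗ (TensorProduct.assoc k M H H).symm.toLinearMap
  ∘ₗ (lTensor M ((TensorProduct.comm k H H).toLinearMap ∘ₗ Coalgebra.comul))

/-- For a right action `act` and right coaction `ρ` on `M`, the map
`x ⊗ h ↦ x₍₀₎h₍₁₎ ⊗ x₍₁₎h₍₂₎` (right side of the Yetter–Drinfel'd condition). -/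
noncomputable def ydR (k H M : Type) [Field k] [Ring H] [HopfAlgebra k H]
    [AddCommGroup M] [Module k M]
    (act : M ⊗[k] H →ₗ[k] M) (ρ : M →ₗ[k] M ⊗[k] H) : M ⊗[k] H →ₗ[k] M ⊗[k] H :=
  (TensorProduct.map act (LinearMap.mul' k H))
  ∘ₗ (TensorProduct.tensorTensorTensorComm k M H H H).toLinearMap
  ∘ₗ (TensorProduct.map ρ (Coalgebra.comul (R := k)))


set_option synthInstance.maxHeartbeats 1000000
set_option maxHeartbeats 4000000
set_option linter.unusedTactic false
set_option linter.unnecessarySimpa false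

open Coalgebra HopfAlgebra

section Conv
variable (k : Type) [Field k]
variable {C A : Type} [AddCommGroup C] [Module k C] [Coalgebra k C]
  [Ring A] [Algebra k A]

variable (k : Type) [Field k]
variable {C A : Type} [AddCommGroup C] [Module k C] [Coalgebra k C]
  [Ring A] [Algebra k A]

/-- convolution product on `Hom(C,A)` -/
noncomputable def myconv (f g : C →ₗ[k] A) : C →ₗ[k] A :=
  (LinearMap.mul' k A) ∘ₗ (TensorProduct.map f g) ∘ₗ Coalgebra.comul

lemma myconv_apply (f g : C →ₗ[k] A) {c : C} {ι : Type*} (r : Coalgebra.Repr k c ι) :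
    myconv k f g c = ∑ i ∈ r.index, f (r.left i) * g (r.right i) := by
  simp only [myconv, LinearMap.comp_apply, ← r.eq, map_sum, TensorProduct.map_tmul,
    LinearMap.mul'_apply]

/-- convolution unit -/
noncomputable def mycunit : C →ₗ[k] A := (Algebra.linearMap k A) ∘ₗ Coalgebra.counit

lemma counit_smul_collapse {B : Type} [AddCommGroup B] [Module k B]
    (f : C →ₗ[k] B) {c : C} {ι : Type*} (r : Coalgebra.Repr k c ι) :
    ∑ i ∈ r.index, Coalgebra.counit (R := k) (r.left i) • f (r.right i) = f c := by
  have h := Coalgebra.sum_counit_tmul_map_eq (R := k) f c (repr := r)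
  have h2 := congrArg (TensorProduct.lid k B) h
  rw [map_sum] at h2
  simp only [TensorProduct.lid_tmul] at h2
  rw [h2]; simp

lemma counit_smul_collapse' {B : Type} [AddCommGroup B] [Module k B]
    (f : C →ₗ[k] B) {c : C} {ι : Type*} (r : Coalgebra.Repr k c ι) :
    ∑ i ∈ r.index, Coalgebra.counit (R := k) (r.right i) • f (r.left i) = f c := by
  have h := Coalgebra.sum_map_tmul_counit_eq (R := k) f c (repr := r)
  have h2 := congrArg (TensorProduct.rid k B) h
  rw [map_sum] at h2
  simp only [TensorProduct.rid_tmul] at h2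
  rw [h2]; simp

lemma myconv_cunit_left (f : C →ₗ[k] A) : myconv k (mycunit k) f = f := by
  ext c
  rw [myconv_apply k _ _ (ℛ k c)]
  simp only [mycunit, LinearMap.comp_apply, Algebra.linearMap_apply, ← Algebra.smul_def]
  exact counit_smul_collapse k f _

lemma myconv_cunit_right (f : C →ₗ[k] A) : myconv k f (mycunit k) = f := by
  ext c
  rw [myconv_apply k _ _ (ℛ k c)]
  simp only [mycunit, LinearMap.comp_apply, Algebra.linearMap_apply]
  have : ∀ i ∈ (ℛ k c).index, f ((ℛ k c).left i) * algebraMap k A (Coalgebra.counit ((ℛ k c).right i))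
      = Coalgebra.counit (R := k) ((ℛ k c).right i) • f ((ℛ k c).left i) := by
    intro i _; rw [← Algebra.commutes, ← Algebra.smul_def]
  rw [Finset.sum_congr rfl this]
  exact counit_smul_collapse' k f _

lemma myconv_assoc (f g h : C →ₗ[k] A) :
    myconv k (myconv k f g) h = myconv k f (myconv k g h) := by
  ext c
  set r := ℛ k c
  set r1 : (i : C × C) → Coalgebra.Repr k (r.left i) (C × C) := fun i => ℛ k (r.left i)
  set r2 : (i : C × C) → Coalgebra.Repr k (r.right i) (C × C) := fun i => ℛ k (r.right i)
  have key := Coalgebra.sum_map_tmul_tmul_eq (R := k) f g h c (repr := r) (a₁ := r1) (a₂ := r2)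
  have key2 := congrArg ((LinearMap.mul' k A) ∘ₗ (LinearMap.lTensor A (LinearMap.mul' k A))) key
  simp only [map_sum, LinearMap.comp_apply, LinearMap.lTensor_tmul, LinearMap.mul'_apply] at key2
  rw [myconv_apply k _ _ r, myconv_apply k _ _ r]
  calc ∑ i ∈ r.index, myconv k f g (r.left i) * h (r.right i)
      = ∑ i ∈ r.index, ∑ j ∈ (r1 i).index,
          f ((r1 i).left j) * (g ((r1 i).right j) * h (r.right i)) := by
        refine Finset.sum_congr rfl fun i _ => ?_
        rw [myconv_apply k _ _ (r1 i), Finset.sum_mul]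
        exact Finset.sum_congr rfl fun j _ => mul_assoc _ _ _
    _ = ∑ i ∈ r.index, ∑ j ∈ (r2 i).index,
          f (r.left i) * (g ((r2 i).left j) * h ((r2 i).right j)) := key2.symm
    _ = ∑ i ∈ r.index, f (r.left i) * myconv k g h (r.right i) := by
        refine Finset.sum_congr rfl fun i _ => ?_
        rw [myconv_apply k _ _ (r2 i), Finset.mul_sum]

lemma myconv_inv_unique {f g g' : C →ₗ[k] A}
    (h1 : myconv k f g = mycunit k) (h2 : myconv k g' f = mycunit k) : g = g' := by
  have : myconv k g' (myconv k f g) = myconv k (myconv k g' f) g := (myconv_assoc k g' f g).symm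
  rw [h1, h2, myconv_cunit_right, myconv_cunit_left] at this
  exact this.symm

end Conv

section HopfAux
variable (k H : Type) [Field k] [Ring H] [HopfAlgebra k H]

local notation "S" => HopfAlgebra.antipode (R := k) (A := H)
local notation "ε" => Coalgebra.counit (R := k)
local notation "Δ" => Coalgebra.comul (R := k)


noncomputable def mulRepr {a b : H} {ι κ : Type*} (ra : Coalgebra.Repr k a ι) (rb : Coalgebra.Repr k b κ) :
    Coalgebra.Repr k (a * b) (ι × κ) where
  index := ra.index ×ˢ rb.index
  left p := ra.left p.1 * rb.left p.2
  right p := ra.right p.1 * rb.right p.2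
  eq := by
    rw [Bialgebra.comul_mul, ← ra.eq, ← rb.eq, Finset.sum_mul_sum, Finset.sum_product]
    simp [Algebra.TensorProduct.tmul_mul_tmul]

noncomputable def tensorRepr {a b : H} {ι κ : Type*} (ra : Coalgebra.Repr k a ι) (rb : Coalgebra.Repr k b κ) :
    Coalgebra.Repr k (a ⊗ₜ[k] b) (ι × κ) where
  index := ra.index ×ˢ rb.index
  left p := ra.left p.1 ⊗ₜ rb.left p.2
  right p := ra.right p.1 ⊗ₜ rb.right p.2
  eq := by
    show _ = (TensorProduct.tensorTensorTensorComm k H H H H) (Δ a ⊗ₜ Δ b)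
    rw [← ra.eq, ← rb.eq, TensorProduct.sum_tmul, Finset.sum_product]
    simp [TensorProduct.tmul_sum, TensorProduct.tensorTensorTensorComm_tmul]

lemma conv_Smul_mul :
    myconv k ((S) ∘ₗ LinearMap.mul' k H) (LinearMap.mul' k H)
      = mycunit k (C := H ⊗[k] H) (A := H) := by
  apply TensorProduct.ext'
  intro a b
  rw [myconv_apply k _ _ (tensorRepr k H (ℛ k a) (ℛ k b))]
  have key := HopfAlgebra.sum_antipode_mul_eq_algebraMap_counit (R := k) (mulRepr k H (ℛ k a) (ℛ k b))
  simp only [mulRepr, Finset.sum_product] at key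
  simp only [tensorRepr, Finset.sum_product, LinearMap.comp_apply, LinearMap.mul'_apply]
  rw [key]
  simp [mycunit, Bialgebra.counit_mul]
  exact Algebra.commutes _ _

lemma conv_mul_mulSS :
    myconv k (LinearMap.mul' k H)
      ((LinearMap.mul' k H) ∘ₗ (TensorProduct.map (S) (S)) ∘ₗ (TensorProduct.comm k H H).toLinearMap)
      = mycunit k (C := H ⊗[k] H) (A := H) := by
  apply TensorProduct.ext'
  intro a b
  rw [myconv_apply k _ _ (tensorRepr k H (ℛ k a) (ℛ k b))]
  simp only [tensorRepr, Finset.sum_product, LinearMap.comp_apply, LinearMap.mul'_apply,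
    LinearEquiv.coe_coe, TensorProduct.comm_tmul, TensorProduct.map_tmul]
  have inner : ∀ i ∈ (ℛ k a).index,
      ∑ j ∈ (ℛ k b).index, (ℛ k a).left i * (ℛ k b).left j *
        ((S) ((ℛ k b).right j) * (S) ((ℛ k a).right i))
      = Coalgebra.counit (R := k) b • ((ℛ k a).left i * (S) ((ℛ k a).right i)) := by
    intro i _
    have hb := HopfAlgebra.sum_mul_antipode_eq_algebraMap_counit (R := k) (ℛ k b)
    calc ∑ j ∈ (ℛ k b).index, (ℛ k a).left i * (ℛ k b).left j *
          ((S) ((ℛ k b).right j) * (S) ((ℛ k a).right i))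
        = (ℛ k a).left i * (∑ j ∈ (ℛ k b).index, (ℛ k b).left j * (S) ((ℛ k b).right j)) *
            (S) ((ℛ k a).right i) := by
          rw [Finset.mul_sum, Finset.sum_mul]
          exact Finset.sum_congr rfl fun j _ => by simp only [mul_assoc]
      _ = Coalgebra.counit (R := k) b • ((ℛ k a).left i * (S) ((ℛ k a).right i)) := by
          rw [hb, ← Algebra.commutes, ← Algebra.smul_def, Algebra.smul_def, Algebra.smul_def,
            ← mul_assoc, Algebra.commutes, mul_assoc]
  rw [Finset.sum_congr rfl inner, ← Finset.smul_sum, HopfAlgebra.sum_mul_antipode_eq_algebraMap_counit (R := k)]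
  simp only [mycunit, LinearMap.comp_apply, Algebra.linearMap_apply, Algebra.smul_def, ← map_mul]
  rw [mul_comm]
  rw [TensorProduct.counit_tmul, smul_eq_mul, mul_comm]

lemma antipode_mul' (a b : H) : (S) (a * b) = (S) b * (S) a := by
  have h := myconv_inv_unique k (conv_mul_mulSS k H) (conv_Smul_mul k H)
  have := congrArg (fun f : H ⊗[k] H →ₗ[k] H => f (a ⊗ₜ b)) h
  simpa using this.symm


noncomputable def oneRepr : Coalgebra.Repr k (1 : H) ℕ where
  index := ({0} : Finset ℕ)
  left _ := 1
  right _ := 1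
  eq := by simp [Algebra.TensorProduct.one_def]

lemma antipode_one' : S (1 : H) = 1 := by
  have := HopfAlgebra.sum_antipode_mul_eq_algebraMap_counit (R := k) (oneRepr k H)
  simpa [oneRepr] using this



/-- `x ⊗ (y ⊗ z) ↦ (S x * y) ⊗ (w * z)` -/
noncomputable def thetaMap (w : H) : H ⊗[k] (H ⊗[k] H) →ₗ[k] H ⊗[k] H :=
  (TensorProduct.map ((LinearMap.mul' k H) ∘ₗ (LinearMap.rTensor H (S))) (LinearMap.mulLeft k w))
  ∘ₗ (TensorProduct.assoc k H H H).symm.toLinearMap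

lemma thetaMap_tmul (w x y z : H) :
    thetaMap k H w (x ⊗ₜ (y ⊗ₜ z)) = ((S) x * y) ⊗ₜ (w * z) := by
  simp [thetaMap]

lemma theta (w c : H) :
    ∑ j ∈ (ℛ k c).index, ∑ l ∈ (ℛ k ((ℛ k c).right j)).index,
      ((S) ((ℛ k c).left j) * (ℛ k ((ℛ k c).right j)).left l)
        ⊗ₜ[k] (w * (ℛ k ((ℛ k c).right j)).right l)
      = (1 : H) ⊗ₜ[k] (w * c) := by
  set r := ℛ k c
  have key := Coalgebra.sum_tmul_tmul_eq (R := k) r (fun j => ℛ k (r.left j))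
    (fun j => ℛ k (r.right j))
  have key2 := congrArg (thetaMap k H w) key
  rw [map_sum] at key2
  simp only [Finset.sum_apply, map_sum, thetaMap_tmul] at key2
  rw [← key2]
  have inner : ∀ j ∈ r.index,
      ∑ l ∈ (ℛ k (r.left j)).index,
        ((S) ((ℛ k (r.left j)).left l) * (ℛ k (r.left j)).right l) ⊗ₜ[k] (w * r.right j)
      = Coalgebra.counit (R := k) (r.left j) •
          ((1 : H) ⊗ₜ[k] (w * r.right j)) := by
    intro j _
    rw [← TensorProduct.sum_tmul, HopfAlgebra.sum_antipode_mul_eq_algebraMap_counit (R := k)]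
    rw [Algebra.algebraMap_eq_smul_one, TensorProduct.smul_tmul']
  rw [Finset.sum_congr rfl inner]
  exact counit_smul_collapse k ((TensorProduct.mk k H H 1) ∘ₗ (LinearMap.mulLeft k w)) r

/-- `x ⊗ (y ⊗ z) ↦ (S y ⊗ S x) * Δ z` -/
noncomputable def xiMap : H ⊗[k] (H ⊗[k] H) →ₗ[k] H ⊗[k] H :=
  (LinearMap.mul' k (H ⊗[k] H))
  ∘ₗ (TensorProduct.map ((TensorProduct.map (S) (S)) ∘ₗ (TensorProduct.comm k H H).toLinearMap)
        (Coalgebra.comul (R := k)))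
  ∘ₗ (TensorProduct.assoc k H H H).symm.toLinearMap

lemma xiMap_tmul (x y z : H) :
    xiMap k H (x ⊗ₜ (y ⊗ₜ z)) = ((S) y ⊗ₜ (S) x) * (Δ z) := by
  simp [xiMap]

lemma conv_comul_comulS :
    myconv k (Coalgebra.comul) (Coalgebra.comul ∘ₗ (S)) = mycunit k (C := H) (A := H ⊗[k] H) := by
  ext h
  rw [myconv_apply k _ _ (ℛ k h)]
  simp only [LinearMap.comp_apply]
  have : ∀ i ∈ (ℛ k h).index,
      (Δ ((ℛ k h).left i)) * (Δ ((S) ((ℛ k h).right i)))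
        = Δ ((ℛ k h).left i * (S) ((ℛ k h).right i)) := by
    intro i _; rw [Bialgebra.comul_mul]
  rw [Finset.sum_congr rfl this, ← map_sum, HopfAlgebra.sum_mul_antipode_eq_algebraMap_counit (R := k)]
  simp only [mycunit, LinearMap.comp_apply, Algebra.linearMap_apply]
  exact (Bialgebra.comulAlgHom k H).commutes _

lemma conv_SS_comul :
    myconv k ((TensorProduct.map (S) (S)) ∘ₗ (TensorProduct.comm k H H).toLinearMap
        ∘ₗ Coalgebra.comul) (Coalgebra.comul)
      = mycunit k (C := H) (A := H ⊗[k] H) := by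
  ext h
  rw [myconv_apply k _ _ (ℛ k h)]
  set r := ℛ k h
  have key := Coalgebra.sum_tmul_tmul_eq (R := k) r (fun j => ℛ k (r.left j))
    (fun j => ℛ k (r.right j))
  have key2 := congrArg (xiMap k H) key
  rw [map_sum] at key2
  simp only [Finset.sum_apply, map_sum, xiMap_tmul] at key2
  -- LHS of key2 equals the conv sum
  have lhs_eq : ∑ i ∈ r.index, ∑ j ∈ (ℛ k (r.left i)).index,
      ((S) ((ℛ k (r.left i)).right j) ⊗ₜ[k] (S) ((ℛ k (r.left i)).left j)) * (Δ (r.right i))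
      = ∑ i ∈ r.index,
        ((TensorProduct.map (S) (S)) ((TensorProduct.comm k H H) (Δ (r.left i)))) * (Δ (r.right i)) := by
    refine Finset.sum_congr rfl fun i _ => ?_
    rw [← Finset.sum_mul, ← (ℛ k (r.left i)).eq]
    simp [map_sum]
  -- RHS of key2: expand product and use theta
  have rhs_eq : ∑ i ∈ r.index, ∑ j ∈ (ℛ k (r.right i)).index,
      ((S) ((ℛ k (r.right i)).left j) ⊗ₜ[k] (S) (r.left i)) * (Δ ((ℛ k (r.right i)).right j))
      = ∑ i ∈ r.index, (1 : H) ⊗ₜ[k] ((S) (r.left i) * r.right i) := by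
    refine Finset.sum_congr rfl fun i _ => ?_
    have expand : ∀ j ∈ (ℛ k (r.right i)).index,
        ((S) ((ℛ k (r.right i)).left j) ⊗ₜ[k] (S) (r.left i)) * (Δ ((ℛ k (r.right i)).right j))
        = ∑ l ∈ (ℛ k ((ℛ k (r.right i)).right j)).index,
            ((S) ((ℛ k (r.right i)).left j) * (ℛ k ((ℛ k (r.right i)).right j)).left l)
              ⊗ₜ[k] ((S) (r.left i) * (ℛ k ((ℛ k (r.right i)).right j)).right l) := by
      intro j _
      rw [← (ℛ k ((ℛ k (r.right i)).right j)).eq, Finset.mul_sum]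
      simp [Algebra.TensorProduct.tmul_mul_tmul]
    rw [Finset.sum_congr rfl expand]
    exact theta k H ((S) (r.left i)) (r.right i)
  rw [lhs_eq, rhs_eq] at key2
  simp only [LinearMap.comp_apply, LinearEquiv.coe_coe]
  rw [key2]
  rw [← TensorProduct.tmul_sum, HopfAlgebra.sum_antipode_mul_eq_algebraMap_counit (R := k)]
  simp only [mycunit, LinearMap.comp_apply, Algebra.linearMap_apply]
  rw [Algebra.TensorProduct.algebraMap_apply, Algebra.algebraMap_eq_smul_one]
  rw [TensorProduct.tmul_smul, TensorProduct.smul_tmul']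

lemma comul_antipode' (h : H) :
    Δ ((S) h) = (TensorProduct.map (S) (S)) ((TensorProduct.comm k H H) (Δ h)) := by
  have key := myconv_inv_unique k (conv_comul_comulS k H) (conv_SS_comul k H)
  have := congrArg (fun f : H →ₗ[k] H ⊗[k] H => f h) key
  simpa using this

lemma comul_antipode_repr {h : H} {ι : Type*} (r : Coalgebra.Repr k h ι) :
    Δ ((S) h) = ∑ i ∈ r.index, (S) (r.right i) ⊗ₜ[k] (S) (r.left i) := by
  rw [comul_antipode', ← r.eq]
  simp [map_sum]


lemma adAct_tmul (g h : H) {ι : Type*} (r : Coalgebra.Repr k h ι) :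
    adAct k H (g ⊗ₜ h) = ∑ i ∈ r.index, ((S) (r.left i) * g) * r.right i := by
  simp only [adAct, LinearMap.comp_apply, LinearMap.lTensor_tmul]
  rw [← r.eq]
  simp only [TensorProduct.tmul_sum, map_sum, LinearMap.lTensor_tmul, LinearMap.rTensor_tmul,
    LinearEquiv.coe_coe, TensorProduct.assoc_symm_tmul, TensorProduct.comm_tmul,
    LinearMap.comp_apply, LinearMap.mul'_apply]

lemma tilDelta_apply (h : H) : tilDelta k H h = Δ h - 1 ⊗ₜ h := by
  simp [tilDelta]

lemma adAct_one_right (g : H) : adAct k H (g ⊗ₜ (1 : H)) = g := by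
  rw [adAct_tmul k H g 1 (oneRepr k H)]
  simp [oneRepr, antipode_one' k H]

lemma adAct_ker (g : H) (hg : Coalgebra.counit (R := k) g = 0) (h : H) :
    Coalgebra.counit (R := k) (adAct k H (g ⊗ₜ h)) = 0 := by
  rw [adAct_tmul k H g h (ℛ k h), map_sum]
  refine Finset.sum_eq_zero fun i _ => ?_
  rw [Bialgebra.counit_mul, Bialgebra.counit_mul, hg]
  ring

lemma adAct_assoc (g a b : H) :
    adAct k H (adAct k H (g ⊗ₜ a) ⊗ₜ b) = adAct k H (g ⊗ₜ (a * b)) := by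
  rw [adAct_tmul k H _ b (ℛ k b), adAct_tmul k H g (a * b) (mulRepr k H (ℛ k a) (ℛ k b))]
  simp only [mulRepr, Finset.sum_product]
  rw [Finset.sum_comm]
  refine Finset.sum_congr rfl fun j _ => ?_
  rw [adAct_tmul k H g a (ℛ k a), Finset.mul_sum, Finset.sum_mul]
  refine Finset.sum_congr rfl fun i _ => ?_
  rw [antipode_mul' k H]
  simp only [mul_assoc]

lemma tilDelta_range (h : H) :
    tilDelta k H h ∈ LinearMap.range
      (rTensor H (LinearMap.ker (Coalgebra.counit (R := k) (A := H))).subtype) := by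
  set r := ℛ k h
  have mem : ∀ i, r.left i - algebraMap k H (Coalgebra.counit (R := k) (r.left i))
      ∈ LinearMap.ker (Coalgebra.counit (R := k) (A := H)) := by
    intro i
    have : Coalgebra.counit (R := k) (algebraMap k H (Coalgebra.counit (R := k) (r.left i)))
        = Coalgebra.counit (R := k) (r.left i) := by
      have := (Bialgebra.counitAlgHom k H).commutes (Coalgebra.counit (R := k) (r.left i))
      simpa using this
    simp [LinearMap.mem_ker, map_sub, this]
  refine ⟨∑ i ∈ r.index,
    (⟨r.left i - algebraMap k H (Coalgebra.counit (R := k) (r.left i)), mem i⟩ :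
      LinearMap.ker (Coalgebra.counit (R := k) (A := H))) ⊗ₜ r.right i, ?_⟩
  rw [map_sum]
  simp only [LinearMap.rTensor_tmul, Submodule.coe_subtype]
  rw [tilDelta_apply]
  have expand : ∀ i ∈ r.index,
      ((r.left i - algebraMap k H (Coalgebra.counit (R := k) (r.left i))) ⊗ₜ[k] r.right i)
      = r.left i ⊗ₜ[k] r.right i -
          Coalgebra.counit (R := k) (r.left i) • ((1 : H) ⊗ₜ[k] r.right i) := by
    intro i _
    rw [TensorProduct.sub_tmul, Algebra.algebraMap_eq_smul_one, TensorProduct.smul_tmul']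
  rw [Finset.sum_congr rfl expand, Finset.sum_sub_distrib]
  have coll := counit_smul_collapse k ((TensorProduct.mk k H H) 1) r
  simp only [TensorProduct.mk_apply] at coll
  rw [coll, r.eq]

lemma tilDelta_counit (h : H) (hh : Coalgebra.counit (R := k) h = 0) :
    (TensorProduct.rid k H) ((lTensor H (Coalgebra.counit (R := k))) (tilDelta k H h)) = h := by
  rw [tilDelta_apply]
  rw [map_sub, map_sub, Coalgebra.lTensor_counit_comul]
  simp [hh]

lemma tilDelta_one : tilDelta k H (1 : H) = 0 := by
  rw [tilDelta_apply, Bialgebra.comul_one, Algebra.TensorProduct.one_def, sub_self]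

lemma assoc_rTensor_mk1_map :
    (TensorProduct.assoc k H H H).toLinearMap ∘ₗ (rTensor H ((TensorProduct.mk k H H) 1))
      = TensorProduct.mk k H (H ⊗[k] H) 1 := by
  apply TensorProduct.ext'
  intro a b
  simp

lemma assoc_rTensor_mk1 (x : H ⊗[k] H) :
    (TensorProduct.assoc k H H H) ((rTensor H ((TensorProduct.mk k H H) 1)) x)
      = 1 ⊗ₜ x := by
  have := congrArg (fun f : H ⊗[k] H →ₗ[k] H ⊗[k] (H ⊗[k] H) => f x)
    (assoc_rTensor_mk1_map k H)
  simpa using this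

lemma tilDelta_coassoc (h : H) :
    (TensorProduct.assoc k H H H) ((rTensor H (tilDelta k H)) (tilDelta k H h))
      = (lTensor H (Coalgebra.comul (R := k))) (tilDelta k H h) := by
  rw [tilDelta_apply]
  rw [map_sub, map_sub]
  simp only [LinearMap.rTensor_tmul, LinearMap.lTensor_tmul, tilDelta_one, TensorProduct.zero_tmul,
    map_zero, sub_zero]
  have : (rTensor H (tilDelta k H)) (Δ h)
      = (rTensor H (Coalgebra.comul (R := k))) (Δ h)
        - (rTensor H ((TensorProduct.mk k H H) 1)) (Δ h) := by
    rw [tilDelta]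
    rw [LinearMap.rTensor_sub]
    rfl
  rw [this, map_sub, Coalgebra.coassoc_apply, assoc_rTensor_mk1]
  rw [map_sub, LinearMap.lTensor_tmul]


/-- the iterated comultiplication `c ↦ c₁ ⊗ (c₂ ⊗ (c₃ ⊗ c₄))` -/
noncomputable def T3 : H →ₗ[k] H ⊗[k] (H ⊗[k] (H ⊗[k] H)) :=
  (lTensor H (lTensor H (Coalgebra.comul (R := k))))
  ∘ₗ (lTensor H (Coalgebra.comul (R := k)))
  ∘ₗ (Coalgebra.comul (R := k))

lemma T3_expand2 (c : H) :
    T3 k H c = ∑ i ∈ (ℛ k c).index, ∑ j ∈ (ℛ k ((ℛ k c).right i)).index,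
      (ℛ k c).left i ⊗ₜ[k] ((ℛ k ((ℛ k c).right i)).left j
        ⊗ₜ[k] (Δ ((ℛ k ((ℛ k c).right i)).right j))) := by
  simp only [T3, LinearMap.comp_apply]
  rw [← (ℛ k c).eq, map_sum, map_sum]
  refine Finset.sum_congr rfl fun i _ => ?_
  rw [LinearMap.lTensor_tmul, ← (ℛ k ((ℛ k c).right i)).eq, TensorProduct.tmul_sum, map_sum]
  refine Finset.sum_congr rfl fun j _ => ?_
  rw [LinearMap.lTensor_tmul, LinearMap.lTensor_tmul]

lemma lemmaC (c : H) :
    T3 k H c = ∑ i ∈ (ℛ k c).index, ∑ j ∈ (ℛ k ((ℛ k c).right i)).index,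
      ∑ l ∈ (ℛ k ((ℛ k ((ℛ k c).right i)).right j)).index,
      (ℛ k c).left i ⊗ₜ[k] ((ℛ k ((ℛ k c).right i)).left j
        ⊗ₜ[k] ((ℛ k ((ℛ k ((ℛ k c).right i)).right j)).left l
          ⊗ₜ[k] (ℛ k ((ℛ k ((ℛ k c).right i)).right j)).right l)) := by
  rw [T3_expand2]
  refine Finset.sum_congr rfl fun i _ => Finset.sum_congr rfl fun j _ => ?_
  rw [← (ℛ k ((ℛ k ((ℛ k c).right i)).right j)).eq, TensorProduct.tmul_sum,
    TensorProduct.tmul_sum]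

lemma lemmaA (c : H) :
    ∑ i ∈ (ℛ k c).index, ∑ j ∈ (ℛ k ((ℛ k c).left i)).index,
      ∑ l ∈ (ℛ k ((ℛ k c).right i)).index,
      (ℛ k ((ℛ k c).left i)).left j ⊗ₜ[k] ((ℛ k ((ℛ k c).left i)).right j
        ⊗ₜ[k] ((ℛ k ((ℛ k c).right i)).left l ⊗ₜ[k] (ℛ k ((ℛ k c).right i)).right l))
    = T3 k H c := by
  have key := Coalgebra.sum_tmul_tmul_eq (R := k) (ℛ k c) (fun i => ℛ k ((ℛ k c).left i))
    (fun i => ℛ k ((ℛ k c).right i))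
  have key2 := congrArg (lTensor H (lTensor H (Coalgebra.comul (R := k)))) key
  rw [map_sum, map_sum] at key2
  simp only [map_sum, LinearMap.lTensor_tmul] at key2
  rw [T3_expand2]
  calc _ = ∑ i ∈ (ℛ k c).index, ∑ j ∈ (ℛ k ((ℛ k c).left i)).index,
        (ℛ k ((ℛ k c).left i)).left j ⊗ₜ[k] ((ℛ k ((ℛ k c).left i)).right j
          ⊗ₜ[k] (Δ ((ℛ k c).right i))) := by
        refine Finset.sum_congr rfl fun i _ => Finset.sum_congr rfl fun j _ => ?_
        rw [← (ℛ k ((ℛ k c).right i)).eq, TensorProduct.tmul_sum, TensorProduct.tmul_sum]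
    _ = _ := key2

lemma lemmaB (c : H) :
    ∑ i ∈ (ℛ k c).index, ∑ j ∈ (ℛ k ((ℛ k c).right i)).index,
      ∑ n ∈ (ℛ k ((ℛ k ((ℛ k c).right i)).left j)).index,
      (ℛ k c).left i ⊗ₜ[k] ((ℛ k ((ℛ k ((ℛ k c).right i)).left j)).left n
        ⊗ₜ[k] ((ℛ k ((ℛ k ((ℛ k c).right i)).left j)).right n
          ⊗ₜ[k] (ℛ k ((ℛ k c).right i)).right j))
    = T3 k H c := by
  rw [T3_expand2]
  refine Finset.sum_congr rfl fun i _ => ?_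
  have key := Coalgebra.sum_tmul_tmul_eq (R := k) (ℛ k ((ℛ k c).right i))
    (fun j => ℛ k ((ℛ k ((ℛ k c).right i)).left j))
    (fun j => ℛ k ((ℛ k ((ℛ k c).right i)).right j))
  calc ∑ j ∈ (ℛ k ((ℛ k c).right i)).index,
        ∑ n ∈ (ℛ k ((ℛ k ((ℛ k c).right i)).left j)).index,
        (ℛ k c).left i ⊗ₜ[k] ((ℛ k ((ℛ k ((ℛ k c).right i)).left j)).left n
          ⊗ₜ[k] ((ℛ k ((ℛ k ((ℛ k c).right i)).left j)).right n
            ⊗ₜ[k] (ℛ k ((ℛ k c).right i)).right j))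
      = (ℛ k c).left i ⊗ₜ[k] (∑ j ∈ (ℛ k ((ℛ k c).right i)).index,
          ∑ n ∈ (ℛ k ((ℛ k ((ℛ k c).right i)).left j)).index,
          ((ℛ k ((ℛ k ((ℛ k c).right i)).left j)).left n
            ⊗ₜ[k] ((ℛ k ((ℛ k ((ℛ k c).right i)).left j)).right n
              ⊗ₜ[k] (ℛ k ((ℛ k c).right i)).right j))) := by
        rw [TensorProduct.tmul_sum]
        exact Finset.sum_congr rfl fun j _ => by rw [TensorProduct.tmul_sum]
    _ = (ℛ k c).left i ⊗ₜ[k] (∑ j ∈ (ℛ k ((ℛ k c).right i)).index,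
          (ℛ k ((ℛ k c).right i)).left j ⊗ₜ[k]
            (Δ ((ℛ k ((ℛ k c).right i)).right j))) := by
        rw [key]
        congr 1
        refine Finset.sum_congr rfl fun j _ => ?_
        rw [← (ℛ k ((ℛ k ((ℛ k c).right i)).right j)).eq, TensorProduct.tmul_sum]
    _ = _ := by rw [TensorProduct.tmul_sum]


/-- `x ⊗ y ↦ (S x * a) * y` -/
noncomputable def n3 (a : H) : H ⊗[k] H →ₗ[k] H :=
  (LinearMap.mul' k H) ∘ₗ (rTensor H ((LinearMap.mulRight k a) ∘ₗ (S)))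

lemma n3_tmul (a x y : H) : n3 k H a (x ⊗ₜ y) = ((S) x * a) * y := by
  simp [n3]

/-- `l1 ⊗ (l2 ⊗ (l3 ⊗ l4)) ↦ ((S l2 * a) * l3) ⊗ ((S l1 * b) * l4)` -/
noncomputable def psiMap (a b : H) : H ⊗[k] (H ⊗[k] (H ⊗[k] H)) →ₗ[k] H ⊗[k] H :=
  (TensorProduct.map (n3 k H a) (n3 k H b))
  ∘ₗ (rTensor (H ⊗[k] H) (TensorProduct.comm k H H).toLinearMap)
  ∘ₗ (TensorProduct.tensorTensorTensorComm k H H H H).toLinearMap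
  ∘ₗ (rTensor (H ⊗[k] H) (TensorProduct.comm k H H).toLinearMap)
  ∘ₗ (TensorProduct.tensorTensorTensorComm k H H H H).toLinearMap
  ∘ₗ (TensorProduct.assoc k H H (H ⊗[k] H)).symm.toLinearMap

lemma psiMap_tmul (a b l1 l2 l3 l4 : H) :
    psiMap k H a b (l1 ⊗ₜ (l2 ⊗ₜ (l3 ⊗ₜ l4)))
      = (((S) l2 * a) * l3) ⊗ₜ[k] (((S) l1 * b) * l4) := by
  simp [psiMap, n3_tmul]

/-- main intermediate lemma: `Δ(g ⊲ c) = Σ (g₁ ⊲ c₂) ⊗ (S c₁ * g₂ * c₃)` -/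
lemma comul_adAct (g c : H) :
    Δ (adAct k H (g ⊗ₜ c))
      = ∑ m ∈ (ℛ k g).index, ∑ i ∈ (ℛ k c).index,
          ∑ j ∈ (ℛ k ((ℛ k c).right i)).index,
          adAct k H ((ℛ k g).left m ⊗ₜ (ℛ k ((ℛ k c).right i)).left j)
            ⊗ₜ[k] (((S) ((ℛ k c).left i) * (ℛ k g).right m)
              * (ℛ k ((ℛ k c).right i)).right j) := by
  have rhs : ∑ m ∈ (ℛ k g).index, ∑ i ∈ (ℛ k c).index,
        ∑ j ∈ (ℛ k ((ℛ k c).right i)).index,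
        adAct k H ((ℛ k g).left m ⊗ₜ (ℛ k ((ℛ k c).right i)).left j)
          ⊗ₜ[k] (((S) ((ℛ k c).left i) * (ℛ k g).right m)
            * (ℛ k ((ℛ k c).right i)).right j)
      = ∑ m ∈ (ℛ k g).index,
          psiMap k H ((ℛ k g).left m) ((ℛ k g).right m) (T3 k H c) := by
    refine Finset.sum_congr rfl fun m _ => ?_
    rw [← lemmaB k H c]
    simp only [map_sum, psiMap_tmul]
    refine Finset.sum_congr rfl fun i _ => Finset.sum_congr rfl fun j _ => ?_
    rw [adAct_tmul k H _ _ (ℛ k ((ℛ k ((ℛ k c).right i)).left j)),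
      TensorProduct.sum_tmul]
  rw [rhs]
  rw [adAct_tmul k H g c (ℛ k c), map_sum]
  have lhs : ∀ i ∈ (ℛ k c).index,
      Δ (((S) ((ℛ k c).left i) * g) * (ℛ k c).right i)
      = ∑ l ∈ (ℛ k ((ℛ k c).right i)).index, ∑ m ∈ (ℛ k g).index,
          ∑ j ∈ (ℛ k ((ℛ k c).left i)).index,
        psiMap k H ((ℛ k g).left m) ((ℛ k g).right m)
          ((ℛ k ((ℛ k c).left i)).left j ⊗ₜ[k] ((ℛ k ((ℛ k c).left i)).right j
            ⊗ₜ[k] ((ℛ k ((ℛ k c).right i)).left l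
              ⊗ₜ[k] (ℛ k ((ℛ k c).right i)).right l))) := by
    intro i _
    rw [Bialgebra.comul_mul, Bialgebra.comul_mul]
    rw [comul_antipode_repr k H (ℛ k ((ℛ k c).left i)), ← (ℛ k g).eq,
      ← (ℛ k ((ℛ k c).right i)).eq]
    simp only [Finset.sum_mul, Finset.mul_sum, Algebra.TensorProduct.tmul_mul_tmul,
      psiMap_tmul]
  calc ∑ i ∈ (ℛ k c).index, Δ (((S) ((ℛ k c).left i) * g) * (ℛ k c).right i)
      = ∑ i ∈ (ℛ k c).index, ∑ m ∈ (ℛ k g).index,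
          ∑ l ∈ (ℛ k ((ℛ k c).right i)).index, ∑ j ∈ (ℛ k ((ℛ k c).left i)).index,
          psiMap k H ((ℛ k g).left m) ((ℛ k g).right m)
            ((ℛ k ((ℛ k c).left i)).left j ⊗ₜ[k] ((ℛ k ((ℛ k c).left i)).right j
              ⊗ₜ[k] ((ℛ k ((ℛ k c).right i)).left l
                ⊗ₜ[k] (ℛ k ((ℛ k c).right i)).right l))) := by
        refine Finset.sum_congr rfl fun i hi => ?_
        rw [lhs i hi]
        exact Finset.sum_comm
    _ = ∑ m ∈ (ℛ k g).index, ∑ i ∈ (ℛ k c).index,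
          ∑ l ∈ (ℛ k ((ℛ k c).right i)).index, ∑ j ∈ (ℛ k ((ℛ k c).left i)).index,
          psiMap k H ((ℛ k g).left m) ((ℛ k g).right m)
            ((ℛ k ((ℛ k c).left i)).left j ⊗ₜ[k] ((ℛ k ((ℛ k c).left i)).right j
              ⊗ₜ[k] ((ℛ k ((ℛ k c).right i)).left l
                ⊗ₜ[k] (ℛ k ((ℛ k c).right i)).right l))) := by
        exact Finset.sum_comm
    _ = ∑ m ∈ (ℛ k g).index,
          psiMap k H ((ℛ k g).left m) ((ℛ k g).right m) (T3 k H c) := by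
        refine Finset.sum_congr rfl fun m _ => ?_
        rw [← lemmaA k H c]
        simp only [map_sum]
        refine Finset.sum_congr rfl fun i _ => ?_
        exact Finset.sum_comm


/-- `x ⊗ y ↦ x * S y` -/
noncomputable def nu : H ⊗[k] H →ₗ[k] H :=
  (LinearMap.mul' k H) ∘ₗ (lTensor H (S))

lemma nu_tmul (x y : H) : nu k H (x ⊗ₜ y) = x * (S) y := by simp [nu]

lemma lemmaD0 (c : H) :
    (rTensor (H ⊗[k] H) (nu k H)) ((TensorProduct.assoc k H H (H ⊗[k] H)).symm (T3 k H c))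
      = 1 ⊗ₜ[k] (Δ c) := by
  have key := Coalgebra.sum_tmul_tmul_eq (R := k) (ℛ k c) (fun i => ℛ k ((ℛ k c).left i))
    (fun i => ℛ k ((ℛ k c).right i))
  have key2 := congrArg ((TensorProduct.map (nu k H) (Coalgebra.comul (R := k)))
    ∘ₗ (TensorProduct.assoc k H H H).symm.toLinearMap) key
  simp only [map_sum, LinearMap.comp_apply, LinearEquiv.coe_coe,
    TensorProduct.assoc_symm_tmul, TensorProduct.map_tmul, nu_tmul] at key2
  have expand : (rTensor (H ⊗[k] H) (nu k H))
      ((TensorProduct.assoc k H H (H ⊗[k] H)).symm (T3 k H c))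
    = ((rTensor (H ⊗[k] H) (nu k H))
        ∘ₗ (TensorProduct.assoc k H H (H ⊗[k] H)).symm.toLinearMap) (T3 k H c) := rfl
  rw [expand, T3_expand2, map_sum]
  simp only [map_sum, LinearMap.comp_apply, LinearEquiv.coe_coe, TensorProduct.assoc_symm_tmul,
    LinearMap.rTensor_tmul, nu_tmul]
  rw [← key2]
  have inner : ∀ i ∈ (ℛ k c).index,
      ∑ j ∈ (ℛ k ((ℛ k c).left i)).index,
        ((ℛ k ((ℛ k c).left i)).left j * (S) ((ℛ k ((ℛ k c).left i)).right j))
          ⊗ₜ[k] (Δ ((ℛ k c).right i))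
      = Coalgebra.counit (R := k) ((ℛ k c).left i) •
          ((1 : H) ⊗ₜ[k] (Δ ((ℛ k c).right i))) := by
    intro i _
    rw [← TensorProduct.sum_tmul, HopfAlgebra.sum_mul_antipode_eq_algebraMap_counit (R := k),
      Algebra.algebraMap_eq_smul_one, TensorProduct.smul_tmul']
  rw [Finset.sum_congr rfl inner]
  exact counit_smul_collapse k
    ((TensorProduct.mk k H (H ⊗[k] H) 1) ∘ₗ (Coalgebra.comul (R := k))) (ℛ k c)

/-- `z ⊗ (x ⊗ y) ↦ (g₁ ⊲ x) ⊗ (z * b * y)` -/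
noncomputable def gMap (a b : H) : H ⊗[k] (H ⊗[k] H) →ₗ[k] H ⊗[k] H :=
  (TensorProduct.map ((adAct k H) ∘ₗ (TensorProduct.mk k H H a))
      ((LinearMap.mul' k H) ∘ₗ (rTensor H (LinearMap.mulRight k b))))
  ∘ₗ (TensorProduct.assoc k H H H).toLinearMap
  ∘ₗ (rTensor H (TensorProduct.comm k H H).toLinearMap)
  ∘ₗ (TensorProduct.assoc k H H H).symm.toLinearMap

lemma gMap_tmul (a b z x y : H) :
    gMap k H a b (z ⊗ₜ (x ⊗ₜ y)) = adAct k H (a ⊗ₜ x) ⊗ₜ[k] ((z * b) * y) := by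
  simp [gMap]

noncomputable def phiMap (a b : H) : H ⊗[k] (H ⊗[k] (H ⊗[k] H)) →ₗ[k] H ⊗[k] H :=
  (gMap k H a b)
  ∘ₗ (rTensor (H ⊗[k] H) (nu k H))
  ∘ₗ (TensorProduct.assoc k H H (H ⊗[k] H)).symm.toLinearMap

lemma phiMap_tmul (a b l1 l2 l3 l4 : H) :
    phiMap k H a b (l1 ⊗ₜ (l2 ⊗ₜ (l3 ⊗ₜ l4)))
      = adAct k H (a ⊗ₜ l3) ⊗ₜ[k] (((l1 * (S) l2) * b) * l4) := by
  simp [phiMap, gMap, nu]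

lemma lemmaD (a b c : H) :
    phiMap k H a b (T3 k H c)
      = ∑ i ∈ (ℛ k c).index, adAct k H (a ⊗ₜ (ℛ k c).left i) ⊗ₜ[k] (b * (ℛ k c).right i) := by
  have : phiMap k H a b (T3 k H c)
      = gMap k H a b ((rTensor (H ⊗[k] H) (nu k H))
          ((TensorProduct.assoc k H H (H ⊗[k] H)).symm (T3 k H c))) := rfl
  rw [this, lemmaD0, ← (ℛ k c).eq, TensorProduct.tmul_sum, map_sum]
  refine Finset.sum_congr rfl fun i _ => ?_
  rw [gMap_tmul, one_mul]

lemma lemmaE (g h : H) :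
    ∑ i ∈ (ℛ k h).index, (ℛ k h).left i * adAct k H (g ⊗ₜ (ℛ k h).right i) = g * h := by
  have key := Coalgebra.sum_tmul_tmul_eq (R := k) (ℛ k h) (fun i => ℛ k ((ℛ k h).left i))
    (fun i => ℛ k ((ℛ k h).right i))
  have key2 := congrArg ((LinearMap.mul' k H) ∘ₗ (lTensor H ((LinearMap.mul' k H)
    ∘ₗ (rTensor H ((LinearMap.mulRight k g) ∘ₗ (S)))))) key
  simp only [map_sum, LinearMap.comp_apply, LinearMap.lTensor_tmul, LinearMap.rTensor_tmul,
    LinearMap.mul'_apply, LinearMap.mulRight_apply] at key2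
  calc ∑ i ∈ (ℛ k h).index, (ℛ k h).left i * adAct k H (g ⊗ₜ (ℛ k h).right i)
      = ∑ i ∈ (ℛ k h).index, ∑ j ∈ (ℛ k ((ℛ k h).right i)).index,
          (ℛ k h).left i * (((S) ((ℛ k ((ℛ k h).right i)).left j) * g)
            * (ℛ k ((ℛ k h).right i)).right j) := by
        refine Finset.sum_congr rfl fun i _ => ?_
        rw [adAct_tmul k H g _ (ℛ k ((ℛ k h).right i)), Finset.mul_sum]
    _ = ∑ i ∈ (ℛ k h).index, ∑ j ∈ (ℛ k ((ℛ k h).left i)).index,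
          (ℛ k ((ℛ k h).left i)).left j * (((S) ((ℛ k ((ℛ k h).left i)).right j) * g)
            * (ℛ k h).right i) := key2.symm
    _ = ∑ i ∈ (ℛ k h).index, Coalgebra.counit (R := k) ((ℛ k h).left i) •
          (g * (ℛ k h).right i) := by
        refine Finset.sum_congr rfl fun i _ => ?_
        have : ∀ j ∈ (ℛ k ((ℛ k h).left i)).index,
            (ℛ k ((ℛ k h).left i)).left j * (((S) ((ℛ k ((ℛ k h).left i)).right j) * g)
              * (ℛ k h).right i)
            = ((ℛ k ((ℛ k h).left i)).left j * (S) ((ℛ k ((ℛ k h).left i)).right j))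
              * (g * (ℛ k h).right i) := by
          intro j _; simp only [mul_assoc]
        rw [Finset.sum_congr rfl this, ← Finset.sum_mul,
          HopfAlgebra.sum_mul_antipode_eq_algebraMap_counit (R := k), ← Algebra.smul_def]
    _ = g * h := by
        have := counit_smul_collapse k (LinearMap.mulLeft k g) (ℛ k h)
        simpa using this

lemma lemmaF (c : H) : adAct k H ((1 : H) ⊗ₜ c) = algebraMap k H (Coalgebra.counit (R := k) c) := by
  rw [adAct_tmul k H 1 c (ℛ k c)]
  simp only [mul_one]
  exact HopfAlgebra.sum_antipode_mul_eq_algebraMap_counit (R := k) (ℛ k c)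


/-- `z ⊗ w ↦ z₁ ⊗ (w * z₂)` -/
noncomputable def qMap (w : H) : H ⊗[k] H →ₗ[k] H ⊗[k] H :=
  (lTensor H ((LinearMap.mul' k H) ∘ₗ (TensorProduct.comm k H H).toLinearMap))
  ∘ₗ (TensorProduct.assoc k H H H).toLinearMap
  ∘ₗ ((TensorProduct.mk k (H ⊗[k] H) H).flip w)

lemma qMap_tmul (w u v : H) : qMap k H w (u ⊗ₜ v) = u ⊗ₜ[k] (w * v) := by
  simp [qMap]

lemma ydL_eval (act : H ⊗[k] H →ₗ[k] H) (ρ : H →ₗ[k] H ⊗[k] H) (g h : H) :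
    ydL k H H act ρ (g ⊗ₜ h)
      = ∑ i ∈ (ℛ k h).index, qMap k H ((ℛ k h).left i) (ρ (act (g ⊗ₜ (ℛ k h).right i))) := by
  simp only [ydL, LinearMap.comp_apply, LinearMap.lTensor_tmul]
  rw [← (ℛ k h).eq]
  simp only [map_sum, TensorProduct.tmul_sum, LinearEquiv.coe_coe, TensorProduct.comm_tmul,
    TensorProduct.assoc_symm_tmul, LinearMap.rTensor_tmul]
  refine Finset.sum_congr rfl fun i _ => ?_
  simp [qMap]

lemma yd_main (g h : H) :
    ydL k H H (adAct k H) (tilDelta k H) (g ⊗ₜ h)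
      = ydR k H H (adAct k H) (tilDelta k H) (g ⊗ₜ h) := by
  -- LHS
  rw [ydL_eval]
  have lhs_split : ∀ i ∈ (ℛ k h).index,
      qMap k H ((ℛ k h).left i) (tilDelta k H (adAct k H (g ⊗ₜ (ℛ k h).right i)))
      = qMap k H ((ℛ k h).left i) (Δ (adAct k H (g ⊗ₜ (ℛ k h).right i)))
        - (1 : H) ⊗ₜ[k] ((ℛ k h).left i * adAct k H (g ⊗ₜ (ℛ k h).right i)) := by
    intro i _
    rw [tilDelta_apply, map_sub, qMap_tmul]
  rw [Finset.sum_congr rfl lhs_split, Finset.sum_sub_distrib]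
  -- part B of LHS
  have partB : ∑ i ∈ (ℛ k h).index,
      (1 : H) ⊗ₜ[k] ((ℛ k h).left i * adAct k H (g ⊗ₜ (ℛ k h).right i))
      = (1 : H) ⊗ₜ[k] (g * h) := by
    rw [← TensorProduct.tmul_sum, lemmaE]
  rw [partB]
  -- part A of LHS
  have partA : ∑ i ∈ (ℛ k h).index,
      qMap k H ((ℛ k h).left i) (Δ (adAct k H (g ⊗ₜ (ℛ k h).right i)))
      = ∑ m ∈ (ℛ k g).index, ∑ i ∈ (ℛ k h).index,
          adAct k H ((ℛ k g).left m ⊗ₜ (ℛ k h).left i)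
            ⊗ₜ[k] ((ℛ k g).right m * (ℛ k h).right i) := by
    calc ∑ i ∈ (ℛ k h).index,
          qMap k H ((ℛ k h).left i) (Δ (adAct k H (g ⊗ₜ (ℛ k h).right i)))
        = ∑ i ∈ (ℛ k h).index, ∑ m ∈ (ℛ k g).index,
            ∑ j ∈ (ℛ k ((ℛ k h).right i)).index,
            ∑ l ∈ (ℛ k ((ℛ k ((ℛ k h).right i)).right j)).index,
            adAct k H ((ℛ k g).left m ⊗ₜ (ℛ k ((ℛ k ((ℛ k h).right i)).right j)).left l)
              ⊗ₜ[k] ((ℛ k h).left i * (((S) ((ℛ k ((ℛ k h).right i)).left j)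
                  * (ℛ k g).right m)
                * (ℛ k ((ℛ k ((ℛ k h).right i)).right j)).right l)) := by
          refine Finset.sum_congr rfl fun i _ => ?_
          rw [comul_adAct k H g ((ℛ k h).right i), map_sum]
          refine Finset.sum_congr rfl fun m _ => ?_
          rw [map_sum]
          refine Finset.sum_congr rfl fun j _ => ?_
          rw [map_sum]
          refine Finset.sum_congr rfl fun l _ => ?_
          rw [qMap_tmul]
      _ = ∑ m ∈ (ℛ k g).index,
            phiMap k H ((ℛ k g).left m) ((ℛ k g).right m) (T3 k H h) := by
          rw [Finset.sum_comm]
          refine Finset.sum_congr rfl fun m _ => ?_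
          rw [lemmaC]
          simp only [map_sum, phiMap_tmul]
          refine Finset.sum_congr rfl fun i _ => Finset.sum_congr rfl fun j _ =>
            Finset.sum_congr rfl fun l _ => ?_
          simp only [mul_assoc]
      _ = _ := by
          refine Finset.sum_congr rfl fun m _ => ?_
          exact lemmaD k H _ _ h
  rw [partA]
  -- RHS
  simp only [ydR, LinearMap.comp_apply, TensorProduct.map_tmul, LinearEquiv.coe_coe]
  rw [tilDelta_apply, TensorProduct.sub_tmul, map_sub, map_sub]
  have rhs1 : (TensorProduct.map (adAct k H) (LinearMap.mul' k H))
      ((TensorProduct.tensorTensorTensorComm k H H H H) ((Δ g) ⊗ₜ[k] (Δ h)))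
      = ∑ m ∈ (ℛ k g).index, ∑ i ∈ (ℛ k h).index,
          adAct k H ((ℛ k g).left m ⊗ₜ (ℛ k h).left i)
            ⊗ₜ[k] ((ℛ k g).right m * (ℛ k h).right i) := by
    rw [← (ℛ k g).eq, ← (ℛ k h).eq, TensorProduct.sum_tmul]
    simp only [TensorProduct.tmul_sum, map_sum, TensorProduct.tensorTensorTensorComm_tmul,
      TensorProduct.map_tmul, LinearMap.mul'_apply]
  have rhs2 : (TensorProduct.map (adAct k H) (LinearMap.mul' k H))
      ((TensorProduct.tensorTensorTensorComm k H H H H) (((1 : H) ⊗ₜ[k] g) ⊗ₜ[k] (Δ h)))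
      = (1 : H) ⊗ₜ[k] (g * h) := by
    rw [← (ℛ k h).eq]
    simp only [TensorProduct.tmul_sum, map_sum, TensorProduct.tensorTensorTensorComm_tmul,
      TensorProduct.map_tmul, LinearMap.mul'_apply, lemmaF]
    have : ∀ i ∈ (ℛ k h).index,
        algebraMap k H (Coalgebra.counit (R := k) ((ℛ k h).left i)) ⊗ₜ[k] (g * (ℛ k h).right i)
        = Coalgebra.counit (R := k) ((ℛ k h).left i) • ((1:H) ⊗ₜ[k] (g * (ℛ k h).right i)) := by
      intro i _
      rw [Algebra.algebraMap_eq_smul_one, TensorProduct.smul_tmul']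
    rw [Finset.sum_congr rfl this]
    exact counit_smul_collapse k
      ((TensorProduct.mk k H H 1) ∘ₗ (LinearMap.mulLeft k g)) (ℛ k h)
  rw [rhs1, rhs2]


end HopfAux

/-- For a Hopf algebra `H`, the kernel of the counit, with the right
adjoint action `g ⊳ h = S(h₍₁₎) g h₍₂₎` and the right coaction
`Δ̃(h) = h₍₁₎ ⊗ h₍₂₎ − 1 ⊗ h`, is a Yetter–Drinfel'd module over `H`:  the action
preserves `ker ε` and is a module action, `Δ̃` takes values in `(ker ε) ⊗ H` and is a
counital coassociative coaction, and the Yetter–Drinfel'd condition holds. -/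
theorem stmt5 (k H : Type) [Field k] [Ring H] [HopfAlgebra k H] :
    letI ε : H →ₗ[k] k := Coalgebra.counit
    -- the adjoint action preserves ker ε and is a right module action
    ((∀ g ∈ LinearMap.ker ε, ∀ h : H, adAct k H (g ⊗ₜ h) ∈ LinearMap.ker ε) ∧
     (∀ g : H, adAct k H (g ⊗ₜ (1 : H)) = g) ∧
     (∀ g a b : H, adAct k H (adAct k H (g ⊗ₜ a) ⊗ₜ b) = adAct k H (g ⊗ₜ (a * b)))) ∧
    -- Δ̃ is well defined with values in (ker ε) ⊗ H
    (∀ h ∈ LinearMap.ker ε,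
      tilDelta k H h ∈ LinearMap.range (rTensor H (LinearMap.ker ε).subtype)) ∧
    -- Δ̃ is counital and coassociative on ker ε
    (∀ h ∈ LinearMap.ker ε,
      (TensorProduct.rid k H) ((lTensor H ε) (tilDelta k H h)) = h) ∧
    (∀ h ∈ LinearMap.ker ε,
      (TensorProduct.assoc k H H H) ((rTensor H (tilDelta k H)) (tilDelta k H h))
        = (lTensor H (Coalgebra.comul (R := k))) (tilDelta k H h)) ∧
    -- the Yetter–Drinfel'd compatibility condition
    (∀ g ∈ LinearMap.ker ε, ∀ h : H,
      ydL k H H (adAct k H) (tilDelta k H) (g ⊗ₜ h)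
        = ydR k H H (adAct k H) (tilDelta k H) (g ⊗ₜ h)) := by
  refine ⟨⟨?_, ?_, ?_⟩, ?_, ?_, ?_, ?_⟩
  · intro g hg h
    rw [LinearMap.mem_ker] at hg ⊢
    exact adAct_ker k H g hg h
  · exact adAct_one_right k H
  · exact adAct_assoc k H
  · intro h _
    exact tilDelta_range k H h
  · intro h hh
    rw [LinearMap.mem_ker] at hh
    exact tilDelta_counit k H h hh
  · intro h _
    exact tilDelta_coassoc k H h
  · intro g _ h
    exact yd_main k H g h
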